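/- Let T₁, T₂, S₁, S₂ be N×N normal complex matrices with S₁ T₁ = T₁ S₁, S₁ T₁* = T₁* S₁ (i.e., [S₁, T₁*] = 0 and each of S₁, T₁, S₂, T₂ is normal), and let Y₁₁, Y₁₂, Y₂₁, Y₂₂ be N×N matrices. Define the 4N×4N matrix X as the block matrix with rows (Y₁₁, T₁Y₁₁, S₁Y₁₁, S₁T₁Y₁₁), (0, Y₁₂, 0, S₂Y₁₂), (0, 0, Y₂₁, T₂Y₂₁), (0, 0, 0, Y₂₂). Then ρ = X*X is fully separable as a state on ℂ²⊗ℂ²⊗ℂᴺ. -/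

import Mathlib

open Matrix Kronecker ComplexOrder

/-- Full separability on ℂᵃ⊗ℂᵇ⊗ℂᶜ: a finite sum of tensor products of
positive semidefinite matrices on the three factors. -/
def Sep3 {a b c : ℕ} (ρ : Matrix (Fin a × Fin b × Fin c) (Fin a × Fin b × Fin c) ℂ) : Prop :=
  ∃ (n : ℕ) (A : Fin n → Matrix (Fin a) (Fin a) ℂ)
    (B : Fin n → Matrix (Fin b) (Fin b) ℂ)
    (C : Fin n → Matrix (Fin c) (Fin c) ℂ),
    (∀ i, (A i).PosSemidef) ∧ (∀ i, (B i).PosSemidef) ∧ (∀ i, (C i).PosSemidef) ∧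
    ρ = ∑ i, A i ⊗ₖ (B i ⊗ₖ C i)

set_option maxHeartbeats 1000000

noncomputable section Stmt6Aux

namespace Stmt6Aux

variable {N : ℕ}

/-- rank one matrix `u u*` -/
def KP (u : Fin N → ℂ) : Matrix (Fin N) (Fin N) ℂ := fun n m => u n * star (u m)

/-- the row vector `u* Y` -/
def wv (Y : Matrix (Fin N) (Fin N) ℂ) (u : Fin N → ℂ) : Fin N → ℂ :=
  fun m => ∑ n, star (u n) * Y n m

/-- the C-factor `Y* u u* Y` -/
def CM (Y : Matrix (Fin N) (Fin N) ℂ) (u : Fin N → ℂ) : Matrix (Fin N) (Fin N) ℂ :=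
  fun m m' => star (wv Y u m) * wv Y u m'

/-- the 2×2 factor `v* v` -/
def AV (v : Fin 2 → ℂ) : Matrix (Fin 2) (Fin 2) ℂ := fun k k' => star (v k) * v k'

lemma AV_posSemidef (v : Fin 2 → ℂ) : (AV v).PosSemidef := by
  have h : AV v = (Matrix.of (fun (_ : Fin 1) k => v k))ᴴ * (Matrix.of fun (_ : Fin 1) k => v k) := by
    ext k k'
    simp [AV, Matrix.mul_apply, Matrix.conjTranspose_apply]
  rw [h]; exact Matrix.posSemidef_conjTranspose_mul_self _

lemma CM_posSemidef (Y : Matrix (Fin N) (Fin N) ℂ) (u : Fin N → ℂ) : (CM Y u).PosSemidef := by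
  have h : CM Y u = (Matrix.of (fun (_ : Fin 1) m => wv Y u m))ᴴ *
      (Matrix.of fun (_ : Fin 1) m => wv Y u m) := by
    ext m m'
    simp [CM, Matrix.mul_apply, Matrix.conjTranspose_apply]
  rw [h]; exact Matrix.posSemidef_conjTranspose_mul_self _

lemma KP_zero : KP (N := N) (fun _ => 0) = 0 := by
  ext n m; simp [KP]

lemma mul_KP (M : Matrix (Fin N) (Fin N) ℂ) (u : Fin N → ℂ) (μ : ℂ)
    (h : M *ᵥ u = μ • u) : M * KP u = μ • KP u := by
  ext n m
  have h' := congrFun h n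
  simp only [mulVec, dotProduct, Pi.smul_apply, smul_eq_mul] at h'
  simp only [Matrix.mul_apply, KP, Matrix.smul_apply, smul_eq_mul]
  calc ∑ k, M n k * (u k * star (u m)) = (∑ k, M n k * u k) * star (u m) := by
        rw [Finset.sum_mul]; exact Finset.sum_congr rfl fun k _ => by ring
    _ = μ * (u n * star (u m)) := by rw [h']; ring

lemma gram {ι : Type} [Fintype ι] (u : ι → Fin N → ℂ) (hsum : ∑ a, KP (u a) = 1)
    (M M' : Matrix (Fin N) (Fin N) ℂ) (lam mu : ι → ℂ)
    (hM : ∀ a, Mᴴ *ᵥ u a = star (lam a) • u a)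
    (hM' : ∀ a, M' *ᵥ u a = mu a • u a) :
    Mᴴ * M' = ∑ a, (star (lam a) * mu a) • KP (u a) := by
  calc Mᴴ * M' = Mᴴ * M' * ∑ a, KP (u a) := by rw [hsum, mul_one]
    _ = ∑ a, Mᴴ * (M' * KP (u a)) := by
        rw [Finset.mul_sum]
        exact Finset.sum_congr rfl fun a _ => by rw [Matrix.mul_assoc]
    _ = ∑ a, (star (lam a) * mu a) • KP (u a) := by
        refine Finset.sum_congr rfl fun a _ => ?_
        rw [mul_KP _ _ _ (hM' a), Matrix.mul_smul, mul_KP _ _ _ (hM a), smul_smul, mul_comm]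

lemma conj_KP (Y : Matrix (Fin N) (Fin N) ℂ) (u : Fin N → ℂ) :
    Yᴴ * KP u * Y = CM Y u := by
  ext m m'
  have h1 : ∀ ν, (Yᴴ * KP u) m ν = star (wv Y u m) * star (u ν) := by
    intro ν
    simp only [Matrix.mul_apply, KP, conjTranspose_apply, wv, star_sum, star_mul', star_star]
    rw [Finset.sum_mul]
    exact Finset.sum_congr rfl fun n _ => by ring
  simp only [Matrix.mul_apply, h1, CM, wv]
  rw [Finset.mul_sum]
  exact Finset.sum_congr rfl fun ν _ => by ring

lemma block {ι : Type} [Fintype ι] (u : ι → Fin N → ℂ) (hsum : ∑ a, KP (u a) = 1)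
    (P Q : Fin 2 → Matrix (Fin N) (Fin N) ℂ) (φ ψ : ι → Fin 2 → ℂ)
    (hP : ∀ a k, P k *ᵥ u a = φ a k • u a)
    (hPc : ∀ a k, (P k)ᴴ *ᵥ u a = star (φ a k) • u a)
    (hQ : ∀ a l, Q l *ᵥ u a = ψ a l • u a)
    (hQc : ∀ a l, (Q l)ᴴ *ᵥ u a = star (ψ a l) • u a)
    (Y : Matrix (Fin N) (Fin N) ℂ)
    (k l k' l' : Fin 2) (m m' : Fin N) :
    ∑ n, star ((P k * Q l * Y) n m) * (P k' * Q l' * Y) n m'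
      = ∑ a, AV (φ a) k k' * (AV (ψ a) l l' * CM Y (u a) m m') := by
  have h1 : ((P k * Q l * Y)ᴴ * (P k' * Q l' * Y)) m m'
      = ∑ n, star ((P k * Q l * Y) n m) * (P k' * Q l' * Y) n m' := by
    rw [Matrix.mul_apply]
    exact Finset.sum_congr rfl fun n _ => by rw [conjTranspose_apply]
  have h2 : (P k * Q l)ᴴ * (P k' * Q l')
      = ∑ a, (star (φ a k * ψ a l) * (φ a k' * ψ a l')) • KP (u a) := by
    refine gram u hsum _ _ (fun a => φ a k * ψ a l) (fun a => φ a k' * ψ a l') ?_ ?_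
    · intro a
      rw [conjTranspose_mul, ← Matrix.mulVec_mulVec, hPc, Matrix.mulVec_smul, hQc,
        smul_smul, star_mul', mul_comm]
    · intro a
      rw [← Matrix.mulVec_mulVec, hQ, Matrix.mulVec_smul, hP, smul_smul, mul_comm]
  have h3 : (P k * Q l * Y)ᴴ * (P k' * Q l' * Y)
      = Yᴴ * ((P k * Q l)ᴴ * (P k' * Q l')) * Y := by
    simp only [conjTranspose_mul, Matrix.mul_assoc]
  rw [← h1, h3, h2, Finset.mul_sum, Finset.sum_mul, Matrix.sum_apply]
  refine Finset.sum_congr rfl fun a _ => ?_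
  rw [Matrix.mul_smul, Matrix.smul_mul, Matrix.smul_apply, conj_KP]
  simp only [AV, smul_eq_mul, star_mul']
  ring

lemma toEuclideanLin_mul (A B : Matrix (Fin N) (Fin N) ℂ) :
    Matrix.toEuclideanLin (A * B) = Matrix.toEuclideanLin A * Matrix.toEuclideanLin B := by
  apply LinearMap.ext
  intro x
  simp [Matrix.toEuclideanLin_apply, Module.End.mul_apply, Matrix.mulVec_mulVec,
    Equiv.apply_symm_apply]

lemma eig (S T : Matrix (Fin N) (Fin N) ℂ)
    (hS : S * Sᴴ = Sᴴ * S) (hT : T * Tᴴ = Tᴴ * T)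
    (hST : S * T = T * S) (hST' : S * Tᴴ = Tᴴ * S) :
    ∃ (ι : Type) (_ : Fintype ι) (u : ι → Fin N → ℂ) (s t : ι → ℂ),
      (∑ a, KP (u a)) = 1 ∧
      (∀ a, S *ᵥ u a = s a • u a) ∧ (∀ a, Sᴴ *ᵥ u a = star (s a) • u a) ∧
      (∀ a, T *ᵥ u a = t a • u a) ∧ (∀ a, Tᴴ *ᵥ u a = star (t a) • u a) := by
  classical
  -- commutation relations as `Commute`
  have cSS' : Commute S Sᴴ := hS
  have cST : Commute S T := hST
  have cST' : Commute S Tᴴ := hST'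
  have cS'T : Commute Sᴴ T := by
    have := congrArg conjTranspose hST'
    exact (by simpa [conjTranspose_mul] using this.symm : Sᴴ * T = T * Sᴴ)
  have cS'T' : Commute Sᴴ Tᴴ := by
    have := congrArg conjTranspose hST
    exact (by simpa [conjTranspose_mul] using this.symm : Sᴴ * Tᴴ = Tᴴ * Sᴴ)
  have cTT' : Commute T Tᴴ := hT
  -- Hermitian building blocks
  set H : Fin 4 → Matrix (Fin N) (Fin N) ℂ :=
    ![((1:ℂ)/2) • S + ((1:ℂ)/2) • Sᴴ,
      (-(Complex.I/2)) • S + (Complex.I/2) • Sᴴ,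
      ((1:ℂ)/2) • T + ((1:ℂ)/2) • Tᴴ,
      (-(Complex.I/2)) • T + (Complex.I/2) • Tᴴ] with hH
  have herm1 : ∀ (A : Matrix (Fin N) (Fin N) ℂ), (((1:ℂ)/2) • A + ((1:ℂ)/2) • Aᴴ).IsHermitian := by
    intro A
    simp only [Matrix.IsHermitian, conjTranspose_add, conjTranspose_smul,
      conjTranspose_conjTranspose]
    simp only [Complex.star_def, map_div₀, _root_.map_one, map_ofNat, map_neg, Complex.conj_I]
    module
  have herm2 : ∀ (A : Matrix (Fin N) (Fin N) ℂ),
      ((-(Complex.I/2)) • A + (Complex.I/2) • Aᴴ).IsHermitian := by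
    intro A
    simp only [Matrix.IsHermitian, conjTranspose_add, conjTranspose_smul,
      conjTranspose_conjTranspose]
    simp only [Complex.star_def, map_div₀, _root_.map_one, map_ofNat, map_neg, Complex.conj_I]
    module
  have hHerm : ∀ j, (H j).IsHermitian := by
    intro j
    fin_cases j
    · exact herm1 S
    · exact herm2 S
    · exact herm1 T
    · exact herm2 T
  have base : ∀ (A B C D : Matrix (Fin N) (Fin N) ℂ), Commute A C → Commute A D →
      Commute B C → Commute B D → ∀ (x y z w : ℂ),
      Commute (x • A + y • B) (z • C + w • D) := by
    intro A B C D h1 h2 h3 h4 x y z w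
    exact (((h1.smul_left x).smul_right z).add_right ((h2.smul_left x).smul_right w)).add_left
      ((((h3.smul_left y).smul_right z).add_right ((h4.smul_left y).smul_right w)))
  have hHcomm : ∀ i j, Commute (H i) (H j) := by
    intro i j
    fin_cases i <;> fin_cases j <;>
      · refine base _ _ _ _ ?_ ?_ ?_ ?_ _ _ _ _ <;>
          first
            | exact Commute.refl _
            | assumption
            | exact cSS'.symm
            | exact cST.symm
            | exact cST'.symm
            | exact cS'T.symm
            | exact cS'T'.symm
            | exact cTT'.symm
  -- symmetric commuting operators on Euclidean space
  set L : Fin 4 → Module.End ℂ (EuclideanSpace ℂ (Fin N)) :=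
    fun j => Matrix.toEuclideanLin (H j) with hL
  have hLsym : ∀ j, (L j).IsSymmetric := fun j =>
    (Matrix.isHermitian_iff_isSymmetric).mp (hHerm j)
  have hLcomm : Pairwise (Function.onFun Commute L) := by
    intro i j _
    show L i * L j = L j * L i
    rw [hL]
    rw [← toEuclideanLin_mul, ← toEuclideanLin_mul, hHcomm i j]
  have hInt := LinearMap.IsSymmetric.LinearMap.IsSymmetric.directSum_isInternal_of_pairwise_commute
    hLsym hLcomm
  set V : (Fin 4 → ℂ) → Submodule ℂ (EuclideanSpace ℂ (Fin N)) :=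
    fun χ => ⨅ j, Module.End.eigenspace (L j) (χ j) with hV
  obtain ⟨hind, hsup⟩ :=
    (DirectSum.isInternal_submodule_iff_iSupIndep_and_iSup_eq_top V).mp hInt
  haveI : Fintype {χ : Fin 4 → ℂ // V χ ≠ ⊥} := hind.fintypeNeBotOfFiniteDimensional
  have hOrth := LinearMap.IsSymmetric.orthogonalFamily_iInf_eigenspaces hLsym
  have hOrth' := hOrth.comp (Subtype.coe_injective (p := fun χ => V χ ≠ ⊥))
  have hsup' : ⨆ i : {χ : Fin 4 → ℂ // V χ ≠ ⊥}, V i.val = ⊤ := by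
    rw [← hsup]
    refine le_antisymm (iSup_le fun i => le_iSup V i.val) (iSup_le fun χ => ?_)
    by_cases h : V χ = ⊥
    · simp [h]
    · exact le_iSup (fun i : {χ : Fin 4 → ℂ // V χ ≠ ⊥} => V i.val) ⟨χ, h⟩
  have hInt' : DirectSum.IsInternal (fun i : {χ : Fin 4 → ℂ // V χ ≠ ⊥} => V i.val) :=
    (DirectSum.isInternal_submodule_iff_iSupIndep_and_iSup_eq_top _).mpr
      ⟨hind.comp Subtype.coe_injective, hsup'⟩
  set b := hInt'.collectedOrthonormalBasis hOrth'
    (fun i : {χ : Fin 4 → ℂ // V χ ≠ ⊥} => stdOrthonormalBasis ℂ (V i.val)) with hb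
  have hmem : ∀ p, b p ∈ V p.1.val := fun p =>
    hInt'.collectedOrthonormalBasis_mem hOrth' _ p
  set ι : Type := Σ i : {χ : Fin 4 → ℂ // V χ ≠ ⊥}, Fin (Module.finrank ℂ (V i.val)) with hι
  set χv : ι → (Fin 4 → ℂ) := fun p => p.1.val with hχv
  set u : ι → Fin N → ℂ := fun p => (WithLp.equiv 2 (Fin N → ℂ)) (b p) with hu
  have hLb : ∀ p j, L j (b p) = χv p j • b p := fun p j =>
    Module.End.mem_eigenspace_iff.mp ((Submodule.mem_iInf _).mp (hmem p) j)
  have hHu : ∀ p j, H j *ᵥ u p = χv p j • u p := by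
    intro p j
    have h1 := hLb p j
    rw [hL] at h1
    rw [Matrix.toEuclideanLin_apply] at h1
    have h2 := congrArg (WithLp.equiv 2 (Fin N → ℂ)) h1
    exact h2
  have hreal : ∀ p j, star (χv p j) = χv p j := by
    intro p j
    refine LinearMap.IsSymmetric.conj_eigenvalue_eq_self (hLsym j)
      (Module.End.hasEigenvalue_of_hasEigenvector (x := b p) ⟨?_, ?_⟩)
    · exact (Submodule.mem_iInf _).mp (hmem p) j
    · exact b.orthonormal.ne_zero p
  -- scalar facts
  have eI1 : Complex.I * (-(Complex.I/2)) = (1/2 : ℂ) := by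
    rw [mul_neg, ← mul_div_assoc, Complex.I_mul_I]
    norm_num
  have eI2 : Complex.I * (Complex.I/2) = (-(1/2) : ℂ) := by
    rw [← mul_div_assoc, Complex.I_mul_I]
    norm_num
  have hS0 : S = H 0 + Complex.I • H 1 := by
    simp only [hH, Matrix.cons_val_zero, Matrix.cons_val_one, Matrix.head_cons]
    rw [smul_add, smul_smul, smul_smul, eI1, eI2]
    module
  have hS0' : Sᴴ = H 0 - Complex.I • H 1 := by
    simp only [hH, Matrix.cons_val_zero, Matrix.cons_val_one, Matrix.head_cons]
    rw [smul_add, smul_smul, smul_smul, eI1, eI2]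
    module
  have hT0 : T = H 2 + Complex.I • H 3 := by
    simp only [hH, Matrix.cons_val_two, Matrix.cons_val_three, Matrix.tail_cons,
      Matrix.cons_val_one, Matrix.head_cons, Matrix.cons_val_zero]
    rw [smul_add, smul_smul, smul_smul, eI1, eI2]
    module
  have hT0' : Tᴴ = H 2 - Complex.I • H 3 := by
    simp only [hH, Matrix.cons_val_two, Matrix.cons_val_three, Matrix.tail_cons,
      Matrix.cons_val_one, Matrix.head_cons, Matrix.cons_val_zero]
    rw [smul_add, smul_smul, smul_smul, eI1, eI2]
    module
  refine ⟨ι, inferInstance, u, fun p => χv p 0 + Complex.I * χv p 1,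
    fun p => χv p 2 + Complex.I * χv p 3, ?_, ?_, ?_, ?_, ?_⟩
  · -- resolution of identity
    ext m m'
    have h := b.sum_inner_mul_inner
      (EuclideanSpace.single m (1:ℂ) : EuclideanSpace ℂ (Fin N))
      (EuclideanSpace.single m' (1:ℂ) : EuclideanSpace ℂ (Fin N))
    simp only [EuclideanSpace.inner_single_left, EuclideanSpace.inner_single_right,
      _root_.map_one, one_mul] at h
    rw [Matrix.sum_apply]
    have h2 : (starRingEnd ℂ) ((EuclideanSpace.single m (1:ℂ) : EuclideanSpace ℂ (Fin N)) m')
        = (1 : Matrix (Fin N) (Fin N) ℂ) m m' := by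
      simp only [EuclideanSpace.single_apply, Matrix.one_apply, apply_ite (starRingEnd ℂ),
        _root_.map_one, map_zero, eq_comm]
    rw [← h2, ← h]
    exact Finset.sum_congr rfl fun p _ => rfl
  · intro p
    rw [hS0, Matrix.add_mulVec, Matrix.smul_mulVec, hHu, hHu, smul_smul, add_smul]
  · intro p
    rw [hS0', Matrix.sub_mulVec, Matrix.smul_mulVec, hHu, hHu, smul_smul]
    rw [star_add, star_mul', hreal, hreal, Complex.star_def, Complex.conj_I]
    module
  · intro p
    rw [hT0, Matrix.add_mulVec, Matrix.smul_mulVec, hHu, hHu, smul_smul, add_smul]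
  · intro p
    rw [hT0', Matrix.sub_mulVec, Matrix.smul_mulVec, hHu, hHu, smul_smul]
    rw [star_add, star_mul', hreal, hreal, Complex.star_def, Complex.conj_I]
    module

-- zero padding of families over a triple sum type
def padl {ι₁ ι₂ ι₃ α : Type} [Zero α] (x : ι₁ → α) : ι₁ ⊕ ι₂ ⊕ ι₃ → α :=
  Sum.elim x (fun _ => 0)

def padm {ι₁ ι₂ ι₃ α : Type} [Zero α] (x : ι₂ → α) : ι₁ ⊕ ι₂ ⊕ ι₃ → α :=
  Sum.elim (fun _ => 0) (Sum.elim x (fun _ => 0))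

def padr {ι₁ ι₂ ι₃ α : Type} [Zero α] (x : ι₃ → α) : ι₁ ⊕ ι₂ ⊕ ι₃ → α :=
  Sum.elim (fun _ => 0) (Sum.elim (fun _ => 0) x)

lemma KP_zero' : KP (N := N) (0 : Fin N → ℂ) = 0 := KP_zero

lemma padl_sum {ι₁ ι₂ ι₃ : Type} [Fintype ι₁] [Fintype ι₂] [Fintype ι₃]
    (u : ι₁ → Fin N → ℂ) (h : ∑ a, KP (u a) = 1) :
    ∑ a : ι₁ ⊕ ι₂ ⊕ ι₃, KP (padl u a) = 1 := by
  rw [Fintype.sum_sum_type, Fintype.sum_sum_type]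
  simp only [padl, Sum.elim_inl, Sum.elim_inr, KP_zero']
  simp [h]

lemma padm_sum {ι₁ ι₂ ι₃ : Type} [Fintype ι₁] [Fintype ι₂] [Fintype ι₃]
    (u : ι₂ → Fin N → ℂ) (h : ∑ a, KP (u a) = 1) :
    ∑ a : ι₁ ⊕ ι₂ ⊕ ι₃, KP (padm u a) = 1 := by
  rw [Fintype.sum_sum_type, Fintype.sum_sum_type]
  simp only [padm, Sum.elim_inl, Sum.elim_inr, KP_zero']
  simp [h]

lemma padr_sum {ι₁ ι₂ ι₃ : Type} [Fintype ι₁] [Fintype ι₂] [Fintype ι₃]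
    (u : ι₃ → Fin N → ℂ) (h : ∑ a, KP (u a) = 1) :
    ∑ a : ι₁ ⊕ ι₂ ⊕ ι₃, KP (padr u a) = 1 := by
  rw [Fintype.sum_sum_type, Fintype.sum_sum_type]
  simp only [padr, Sum.elim_inl, Sum.elim_inr, KP_zero']
  simp [h]

-- eigen conditions for the ![1, S] family
lemma vec_one {ι : Type} (S : Matrix (Fin N) (Fin N) ℂ) (u : ι → Fin N → ℂ) (s : ι → ℂ)
    (h : ∀ a, S *ᵥ u a = s a • u a) :
    ∀ (a : ι) (k : Fin 2), (![1, S] k) *ᵥ u a = (![1, s a] k) • u a := by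
  intro a k
  fin_cases k
  · simp [Matrix.one_mulVec]
  · simpa using h a

lemma vec_one_c {ι : Type} (S : Matrix (Fin N) (Fin N) ℂ) (u : ι → Fin N → ℂ) (s : ι → ℂ)
    (h : ∀ a, Sᴴ *ᵥ u a = star (s a) • u a) :
    ∀ (a : ι) (k : Fin 2), (![1, S] k)ᴴ *ᵥ u a = star (![1, s a] k) • u a := by
  intro a k
  fin_cases k
  · simp [Matrix.one_mulVec, conjTranspose_one]
  · simpa using h a

lemma vec_ind {ι : Type} (u : ι → Fin N → ℂ) :
    ∀ (a : ι) (k : Fin 2), ((![0, 1] : Fin 2 → Matrix (Fin N) (Fin N) ℂ) k) *ᵥ u a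
      = ((![0, (1:ℂ)] : Fin 2 → ℂ) k) • u a := by
  intro a k
  fin_cases k <;> simp [Matrix.zero_mulVec, Matrix.one_mulVec]

lemma vec_ind_c {ι : Type} (u : ι → Fin N → ℂ) :
    ∀ (a : ι) (k : Fin 2), (((![0, 1] : Fin 2 → Matrix (Fin N) (Fin N) ℂ) k))ᴴ *ᵥ u a
      = star ((![0, (1:ℂ)] : Fin 2 → ℂ) k) • u a := by
  intro a k
  fin_cases k <;> simp [Matrix.zero_mulVec, Matrix.one_mulVec, conjTranspose_one]

lemma sep3_of {a b c : ℕ} {ρ : Matrix (Fin a × Fin b × Fin c) (Fin a × Fin b × Fin c) ℂ}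
    {ι : Type} [Fintype ι] (A : ι → Matrix (Fin a) (Fin a) ℂ)
    (B : ι → Matrix (Fin b) (Fin b) ℂ) (C : ι → Matrix (Fin c) (Fin c) ℂ)
    (hA : ∀ i, (A i).PosSemidef) (hB : ∀ i, (B i).PosSemidef) (hC : ∀ i, (C i).PosSemidef)
    (h : ρ = ∑ i, A i ⊗ₖ (B i ⊗ₖ C i)) : Sep3 ρ := by
  refine ⟨Fintype.card ι, A ∘ (Fintype.equivFin ι).symm, B ∘ (Fintype.equivFin ι).symm,
    C ∘ (Fintype.equivFin ι).symm, fun i => hA _, fun i => hB _, fun i => hC _, ?_⟩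
  rw [h]
  exact (Equiv.sum_comp (Fintype.equivFin ι).symm fun i => A i ⊗ₖ (B i ⊗ₖ C i)).symm

end Stmt6Aux

end Stmt6Aux
open Stmt6Aux

theorem stmt6 {N : ℕ} (T₁ T₂ S₁ S₂ Y₁₁ Y₁₂ Y₂₁ Y₂₂ : Matrix (Fin N) (Fin N) ℂ)
    (hT₁ : T₁ * T₁ᴴ = T₁ᴴ * T₁) (hT₂ : T₂ * T₂ᴴ = T₂ᴴ * T₂)
    (hS₁ : S₁ * S₁ᴴ = S₁ᴴ * S₁) (hS₂ : S₂ * S₂ᴴ = S₂ᴴ * S₂)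
    (hc : S₁ * T₁ = T₁ * S₁) (hc' : S₁ * T₁ᴴ = T₁ᴴ * S₁) :
    letI R : Fin 2 → Fin 2 → Fin 2 → Fin 2 → Matrix (Fin N) (Fin N) ℂ :=
      ![![![![Y₁₁, T₁ * Y₁₁], ![S₁ * Y₁₁, S₁ * T₁ * Y₁₁]],
         ![![0, Y₁₂], ![0, S₂ * Y₁₂]]],
        ![![![0, 0], ![Y₂₁, T₂ * Y₂₁]],
         ![![0, 0], ![0, Y₂₂]]]]
    letI X : Matrix (Fin 2 × Fin 2 × Fin N) (Fin 2 × Fin 2 × Fin N) ℂ :=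
      fun p q => (R p.1 p.2.1 q.1 q.2.1) p.2.2 q.2.2
    Sep3 (Xᴴ * X) := by
  obtain ⟨ι₁, i1, u1, s1, t1, hsum1, hSu1, hSc1, hTu1, hTc1⟩ :=
    Stmt6Aux.eig S₁ T₁ hS₁ hT₁ hc hc'
  obtain ⟨ι₂, i2, u2, s2, _t2, hsum2, hSu2, hSc2, _, _⟩ :=
    Stmt6Aux.eig S₂ S₂ hS₂ hS₂ rfl hS₂
  obtain ⟨ι₃, i3, u3, _s3, t3, hsum3, _, _, hTu3, hTc3⟩ :=
    Stmt6Aux.eig T₂ T₂ hT₂ hT₂ rfl hT₂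
  letI := i1; letI := i2; letI := i3
  -- padded resolutions of identity
  have hw1 : ∑ a : ι₁ ⊕ ι₂ ⊕ ι₃, KP (padl u1 a) = 1 := padl_sum u1 hsum1
  have hw2 : ∑ a : ι₁ ⊕ ι₂ ⊕ ι₃, KP (padm u2 a) = 1 := padm_sum u2 hsum2
  have hw3 : ∑ a : ι₁ ⊕ ι₂ ⊕ ι₃, KP (padr u3 a) = 1 := padr_sum u3 hsum3
  -- padded eigen relations
  have pS1 : ∀ a : ι₁ ⊕ ι₂ ⊕ ι₃, S₁ *ᵥ padl u1 a = padl s1 a • padl u1 a := by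
    rintro (x | y)
    · exact hSu1 x
    · simp [padl]
  have pS1c : ∀ a : ι₁ ⊕ ι₂ ⊕ ι₃, S₁ᴴ *ᵥ padl u1 a = star (padl s1 a) • padl u1 a := by
    rintro (x | y)
    · exact hSc1 x
    · simp [padl]
  have pT1 : ∀ a : ι₁ ⊕ ι₂ ⊕ ι₃, T₁ *ᵥ padl u1 a = padl t1 a • padl u1 a := by
    rintro (x | y)
    · exact hTu1 x
    · simp [padl]
  have pT1c : ∀ a : ι₁ ⊕ ι₂ ⊕ ι₃, T₁ᴴ *ᵥ padl u1 a = star (padl t1 a) • padl u1 a := by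
    rintro (x | y)
    · exact hTc1 x
    · simp [padl]
  have pS2 : ∀ a : ι₁ ⊕ ι₂ ⊕ ι₃, S₂ *ᵥ padm u2 a = padm s2 a • padm u2 a := by
    rintro (x | y | z)
    · simp [padm]
    · exact hSu2 y
    · simp [padm]
  have pS2c : ∀ a : ι₁ ⊕ ι₂ ⊕ ι₃, S₂ᴴ *ᵥ padm u2 a = star (padm s2 a) • padm u2 a := by
    rintro (x | y | z)
    · simp [padm]
    · exact hSc2 y
    · simp [padm]
  have pT2 : ∀ a : ι₁ ⊕ ι₂ ⊕ ι₃, T₂ *ᵥ padr u3 a = padr t3 a • padr u3 a := by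
    rintro (x | y | z)
    · simp [padr]
    · simp [padr]
    · exact hTu3 z
  have pT2c : ∀ a : ι₁ ⊕ ι₂ ⊕ ι₃, T₂ᴴ *ᵥ padr u3 a = star (padr t3 a) • padr u3 a := by
    rintro (x | y | z)
    · simp [padr]
    · simp [padr]
    · exact hTc3 z
  -- block identities
  have E00 := block (padl u1) hw1 ![1, S₁] ![1, T₁]
    (fun a => ![1, padl s1 a]) (fun a => ![1, padl t1 a])
    (vec_one S₁ _ _ pS1) (vec_one_c S₁ _ _ pS1c)
    (vec_one T₁ _ _ pT1) (vec_one_c T₁ _ _ pT1c) Y₁₁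
  have E01 := block (padm u2) hw2 ![1, S₂] ![0, 1]
    (fun a => ![1, padm s2 a]) (fun _ => ![0, (1:ℂ)])
    (vec_one S₂ _ _ pS2) (vec_one_c S₂ _ _ pS2c)
    (vec_ind _) (vec_ind_c _) Y₁₂
  have E10 := block (padr u3) hw3 ![0, 1] ![1, T₂]
    (fun _ => ![0, (1:ℂ)]) (fun a => ![1, padr t3 a])
    (vec_ind _) (vec_ind_c _)
    (vec_one T₂ _ _ pT2) (vec_one_c T₂ _ _ pT2c) Y₂₁
  have E11 := block (padl u1) hw1 ![0, 1] ![0, 1]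
    (fun _ => ![0, (1:ℂ)]) (fun _ => ![0, (1:ℂ)])
    (vec_ind _) (vec_ind_c _) (vec_ind _) (vec_ind_c _) Y₂₂
  -- rewriting the blocks of R as products
  have hR00 : ∀ k l : Fin 2,
      (![![Y₁₁, T₁ * Y₁₁], ![S₁ * Y₁₁, S₁ * T₁ * Y₁₁]] : Fin 2 → Fin 2 → Matrix (Fin N) (Fin N) ℂ) k l
        = ![1, S₁] k * ![1, T₁] l * Y₁₁ := by
    intro k l
    fin_cases k <;> fin_cases l <;> simp [Matrix.one_mul]
  have hR01 : ∀ k l : Fin 2,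
      (![![0, Y₁₂], ![0, S₂ * Y₁₂]] : Fin 2 → Fin 2 → Matrix (Fin N) (Fin N) ℂ) k l
        = ![1, S₂] k * ![0, 1] l * Y₁₂ := by
    intro k l
    fin_cases k <;> fin_cases l <;>
      simp [Matrix.one_mul, Matrix.mul_one, Matrix.zero_mul, Matrix.mul_zero]
  have hR10 : ∀ k l : Fin 2,
      (![![0, 0], ![Y₂₁, T₂ * Y₂₁]] : Fin 2 → Fin 2 → Matrix (Fin N) (Fin N) ℂ) k l
        = ![0, 1] k * ![1, T₂] l * Y₂₁ := by
    intro k l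
    fin_cases k <;> fin_cases l <;>
      simp [Matrix.one_mul, Matrix.mul_one, Matrix.zero_mul, Matrix.mul_zero]
  have hR11 : ∀ k l : Fin 2,
      (![![0, 0], ![0, Y₂₂]] : Fin 2 → Fin 2 → Matrix (Fin N) (Fin N) ℂ) k l
        = ![0, 1] k * ![0, 1] l * Y₂₂ := by
    intro k l
    fin_cases k <;> fin_cases l <;>
      simp [Matrix.one_mul, Matrix.mul_one, Matrix.zero_mul, Matrix.mul_zero]
  refine sep3_of
    (fun p : Fin 2 × Fin 2 × (ι₁ ⊕ ι₂ ⊕ ι₃) =>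
      ![![AV ![1, padl s1 p.2.2], AV ![1, padm s2 p.2.2]],
        ![AV ![0, 1], AV ![0, 1]]] p.1 p.2.1)
    (fun p : Fin 2 × Fin 2 × (ι₁ ⊕ ι₂ ⊕ ι₃) =>
      ![![AV ![1, padl t1 p.2.2], AV ![0, 1]],
        ![AV ![1, padr t3 p.2.2], AV ![0, 1]]] p.1 p.2.1)
    (fun p : Fin 2 × Fin 2 × (ι₁ ⊕ ι₂ ⊕ ι₃) =>
      ![![CM Y₁₁ (padl u1 p.2.2), CM Y₁₂ (padm u2 p.2.2)],
        ![CM Y₂₁ (padr u3 p.2.2), CM Y₂₂ (padl u1 p.2.2)]] p.1 p.2.1)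
    ?_ ?_ ?_ ?_
  · rintro ⟨i, j, a⟩
    fin_cases i <;> fin_cases j <;> exact AV_posSemidef _
  · rintro ⟨i, j, a⟩
    fin_cases i <;> fin_cases j <;> exact AV_posSemidef _
  · rintro ⟨i, j, a⟩
    fin_cases i <;> fin_cases j <;> exact CM_posSemidef _ _
  · ext ⟨k, l, m⟩ ⟨k', l', m'⟩
    erw [Matrix.mul_apply, Matrix.sum_apply]
    have hct : ∀ (M : Fin 2 × Fin 2 × Fin N → Fin 2 × Fin 2 × Fin N → ℂ) i j,
        (Matrix.conjTranspose (M : Matrix (Fin 2 × Fin 2 × Fin N) (Fin 2 × Fin 2 × Fin N) ℂ)) i j = star (M j i) :=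
      fun _ _ _ => rfl
    simp only [hct]
    simp only [Matrix.conjTranspose_apply, Matrix.kroneckerMap_apply, Fintype.sum_prod_type]
    simp only [Fin.sum_univ_two]
    simp only [Matrix.cons_val_zero, Matrix.cons_val_one, Matrix.head_cons]
    simp only [hR00, hR01, hR10, hR11]
    rw [E00 k l k' l' m m', E01 k l k' l' m m', E10 k l k' l' m m', E11 k l k' l' m m']
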